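/- Let L be a right Leibniz algebra. The map x ↦ (−ad_x, Ad_x), where ad_x(y) = [y,x] and Ad_x(y) = [x,y], is a homomorphism of Leibniz algebras from L to Bider(L), where Bider(L) carries the bracket [(d,D),(d',D')] = (d∘d' − d'∘d, D∘d' − d'∘D). -/
import Mathlib


variable {F : Type*} [Field F] {L : Type*} [AddCommGroup L] [Module F L]

def IsDer (br : L →ₗ[F] L →ₗ[F] L) (d : L →ₗ[F] L) : Prop :=
  ∀ x y : L, d (br x y) = br (d x) y + br x (d y)

def IsAntiDer (br : L →ₗ[F] L →ₗ[F] L) (D : L →ₗ[F] L) : Prop :=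
  ∀ x y : L, D (br x y) = br (D x) y - br (D y) x

def IsBider (br : L →ₗ[F] L →ₗ[F] L) (p : (L →ₗ[F] L) × (L →ₗ[F] L)) : Prop :=
  IsDer br p.1 ∧ IsAntiDer br p.2 ∧ ∀ x y : L, br x (p.1 y) = br x (p.2 y)

def biderBracket (p q : (L →ₗ[F] L) × (L →ₗ[F] L)) : (L →ₗ[F] L) × (L →ₗ[F] L) :=
  (p.1 ∘ₗ q.1 - q.1 ∘ₗ p.1, p.2 ∘ₗ q.1 - q.1 ∘ₗ p.2)

/-- The map `x ↦ (−ad_x, Ad_x)`. -/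
def innerBider (br : L →ₗ[F] L →ₗ[F] L) (x : L) : (L →ₗ[F] L) × (L →ₗ[F] L) :=
  (-(br.flip x), br x)

/-- `x ↦ (−ad_x, Ad_x)` is a Leibniz algebra homomorphism
`L → Bider(L)`. -/
theorem inner_bider_homomorphism
    (br : L →ₗ[F] L →ₗ[F] L)
    (hleib : ∀ x y z : L, br (br x y) z = br (br x z) y + br x (br y z)) :
    (∀ x : L, IsBider br (innerBider br x)) ∧
    (∀ x y : L, innerBider br (x + y) = innerBider br x + innerBider br y) ∧
    (∀ (c : F) (x : L), innerBider br (c • x) = c • innerBider br x) ∧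
    (∀ x y : L, innerBider br (br x y) =
      biderBracket (innerBider br x) (innerBider br y)) := by
  have key : ∀ a y z : L, br a (br y z) = - br a (br z y) := by
    intro a y z
    have h1 := hleib a y z
    rw [hleib a z y] at h1
    have h4 := left_eq_add.mp (h1.trans (add_assoc _ _ _))
    exact eq_neg_of_add_eq_zero_right h4
  refine ⟨?_, ?_, ?_, ?_⟩
  · intro x
    refine ⟨?_, ?_, ?_⟩
    · intro a b
      simp only [innerBider, LinearMap.neg_apply, LinearMap.flip_apply, map_neg]
      rw [hleib a b x]; abel
    · intro a b
      simp only [innerBider]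
      rw [hleib x a b]; abel
    · intro a b
      simp only [innerBider, LinearMap.neg_apply, LinearMap.flip_apply, map_neg]
      rw [key a b x]; abel
  · intro x y
    simp only [innerBider, map_add, Prod.mk_add_mk, neg_add]
  · intro c x
    simp only [innerBider, map_smul, Prod.smul_mk, smul_neg]
  · intro x y
    refine Prod.ext ?_ ?_ <;>
      · refine LinearMap.ext fun a => ?_
        simp only [innerBider, biderBracket, LinearMap.sub_apply, LinearMap.comp_apply,
          LinearMap.neg_apply, LinearMap.flip_apply, map_neg, neg_neg]
        first
          | (rw [hleib a y x, key a x y]; abel)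
          | (rw [hleib x a y]; abel)
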